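/- Let n balls be thrown independently into n bins where each ball lands in bin i with probability p_i, and let Z = max_i X_i be the maximum bin load. Then E_p[Z] is a Schur-convex function of p = (p_1,...,p_n); in particular E_p[Z] ≥ E_u[Z], where u is the uniform distribution (1/n,...,1/n). -/

import Mathlib

/-- Sum of the `k` largest entries of `x : Fin n → ℝ`. -/
noncomputable def topSum {n : ℕ} (x : Fin n → ℝ) (k : ℕ) : ℝ :=
  sSup {t : ℝ | ∃ s : Finset (Fin n), s.card = k ∧ t = ∑ i ∈ s, x i}

/-- `x` majorizes `y`. -/
def Majorizes {n : ℕ} (x y : Fin n → ℝ) : Prop :=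
  (∀ k ≤ n, topSum y k ≤ topSum x k) ∧ ∑ i, x i = ∑ i, y i

/-- The load of bin `v` under the outcome `ω` assigning each of the `m` balls to a bin. -/
def load {m n : ℕ} (ω : Fin m → Fin n) (v : Fin n) : ℕ :=
  (Finset.univ.filter fun b => ω b = v).card

/-- The maximum bin load `Z = max_i X_i`. -/
def maxLoad {m n : ℕ} (ω : Fin m → Fin n) : ℕ :=
  Finset.univ.sup (load ω)

/-- Expected maximum load when `n` balls are thrown independently into `n` bins,
each ball landing in bin `i` with probability `p i` (so the load vector is
multinomial with `n` trials and probabilities `p`). -/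
noncomputable def expMaxLoad {n : ℕ} (p : Fin n → ℝ) : ℝ :=
  ∑ ω : Fin n → Fin n, (∏ b, p (ω b)) * (maxLoad ω : ℝ)

open Finset

noncomputable def kMax {n : ℕ} (x : Fin n → ℝ) (S : Finset (Fin n)) (k : ℕ) : ℝ :=
  sSup {t : ℝ | ∃ s : Finset (Fin n), s ⊆ S ∧ s.card = k ∧ t = ∑ i ∈ s, x i}

variable {n : ℕ} {x : Fin n → ℝ} {S : Finset (Fin n)} {k : ℕ}

lemma kMax_set_eq :
    {t : ℝ | ∃ s : Finset (Fin n), s ⊆ S ∧ s.card = k ∧ t = ∑ i ∈ s, x i}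
      = ↑((S.powersetCard k).image fun s => ∑ i ∈ s, x i) := by
  ext t
  simp only [Set.mem_setOf_eq, coe_image, Set.mem_image, mem_coe, mem_powersetCard]
  constructor
  · rintro ⟨s, h1, h2, rfl⟩; exact ⟨s, ⟨h1, h2⟩, rfl⟩
  · rintro ⟨s, ⟨h1, h2⟩, rfl⟩; exact ⟨s, h1, h2, rfl⟩

lemma kMax_eq_max' (hk : k ≤ S.card) :
    kMax x S k = ((S.powersetCard k).image fun s => ∑ i ∈ s, x i).max'
      ((powersetCard_nonempty.2 hk).image _) := by
  rw [kMax, kMax_set_eq, Finset.Nonempty.csSup_eq_max']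

lemma kMax_spec (hk : k ≤ S.card) :
    ∃ s : Finset (Fin n), s ⊆ S ∧ s.card = k ∧ kMax x S k = ∑ i ∈ s, x i := by
  have hne : (((S.powersetCard k).image fun s => ∑ i ∈ s, x i)).Nonempty :=
    (powersetCard_nonempty.2 hk).image _
  have h : kMax x S k ∈ ((S.powersetCard k).image fun s => ∑ i ∈ s, x i) := by
    rw [kMax_eq_max' hk]; exact Finset.max'_mem _ hne
  obtain ⟨s, hs, he⟩ := mem_image.1 h
  obtain ⟨h1, h2⟩ := mem_powersetCard.1 hs
  exact ⟨s, h1, h2, he.symm⟩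

lemma le_kMax {s : Finset (Fin n)} (hs : s ⊆ S) (hcard : s.card = k) :
    ∑ i ∈ s, x i ≤ kMax x S k := by
  apply le_csSup
  · rw [kMax_set_eq]; exact (((S.powersetCard k).image fun s => ∑ i ∈ s, x i)).finite_toSet.bddAbove
  · exact ⟨s, hs, hcard, rfl⟩

lemma kMax_zero : kMax x S 0 = 0 := by
  have := kMax_spec (x := x) (S := S) (k := 0) (Nat.zero_le _)
  obtain ⟨s, -, hc, he⟩ := this
  rw [he, card_eq_zero.1 hc, sum_empty]


lemma topSum_eq_kMax (x : Fin n → ℝ) (k : ℕ) : topSum x k = kMax x univ k := by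
  unfold topSum kMax
  congr 1
  ext t
  simp only [Set.mem_setOf_eq]
  exact ⟨fun ⟨s, h1, h2⟩ => ⟨s, subset_univ s, h1, h2⟩, fun ⟨s, _, h1, h2⟩ => ⟨s, h1, h2⟩⟩

/-! ### load and maxLoad lemmas -/

lemma load_comp_perm (σ : Equiv.Perm (Fin n)) {m : ℕ} (ω : Fin m → Fin n) (v : Fin n) :
    load (⇑σ ∘ ω) (σ v) = load ω v := by
  unfold load
  congr 1
  apply filter_congr
  intro b _
  simp [σ.injective.eq_iff]

lemma maxLoad_comp_perm (σ : Equiv.Perm (Fin n)) {m : ℕ} (ω : Fin m → Fin n) :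
    maxLoad (⇑σ ∘ ω) = maxLoad ω := by
  unfold maxLoad
  apply le_antisymm
  · apply Finset.sup_le
    intro v _
    have : load (⇑σ ∘ ω) v = load ω (σ.symm v) := by
      conv_lhs => rw [show v = σ (σ.symm v) by simp]
      exact load_comp_perm σ ω _
    rw [this]
    exact Finset.le_sup (mem_univ _)
  · apply Finset.sup_le
    intro v _
    rw [← load_comp_perm σ ω v]
    exact Finset.le_sup (mem_univ _)

lemma expMaxLoad_comp_perm (σ : Equiv.Perm (Fin n)) (p : Fin n → ℝ) :
    expMaxLoad (p ∘ ⇑σ) = expMaxLoad p := by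
  unfold expMaxLoad
  apply Fintype.sum_equiv (Equiv.piCongrRight fun _ : Fin n => σ)
  intro ω
  have h1 : (⇑(Equiv.piCongrRight fun _ : Fin n => σ) ω) = ⇑σ ∘ ω := rfl
  rw [h1, maxLoad_comp_perm σ ω]
  rfl

/-! ### counting relative to a distinguished ball -/

/-- number of balls other than `b0` landing in bin `v` -/
def cnt (ω : Fin n → Fin n) (b0 : Fin n) (v : Fin n) : ℕ :=
  ((univ.erase b0).filter fun b => ω b = v).card

lemma load_eq_cnt (ω : Fin n → Fin n) (b0 v : Fin n) :
    load ω v = cnt ω b0 v + (if ω b0 = v then 1 else 0) := by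
  unfold load cnt
  conv_lhs => rw [show (univ : Finset (Fin n)) = insert b0 (univ.erase b0) from
    (insert_erase (mem_univ b0)).symm]
  rw [filter_insert]
  by_cases h : ω b0 = v
  · rw [if_pos h, if_pos h, card_insert_of_notMem (by simp)]
  · rw [if_neg h, if_neg h, Nat.add_zero]

lemma cnt_update (ω : Fin n → Fin n) (b0 : Fin n) (x v : Fin n) :
    cnt (Function.update ω b0 x) b0 v = cnt ω b0 v := by
  unfold cnt
  apply congrArg
  apply filter_congr
  intro b hb
  rw [Function.update_of_ne (ne_of_mem_erase hb)]

lemma maxLoad_update_le {i j : Fin n} (ω : Fin n → Fin n) (b0 : Fin n)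
    (hb0 : ω b0 = i) (hcnt : cnt ω b0 j ≤ cnt ω b0 i) :
    maxLoad (Function.update ω b0 j) ≤ maxLoad ω := by
  set ω2 := Function.update ω b0 j with hω2
  apply Finset.sup_le
  intro v _
  have hload2 : load ω2 v = cnt ω b0 v + (if v = j then 1 else 0) := by
    rw [load_eq_cnt ω2 b0 v, cnt_update]
    congr 1
    simp [hω2, Function.update_self, eq_comm]
  by_cases hv : v = j
  · subst hv
    calc load ω2 v = cnt ω b0 v + 1 := by rw [hload2, if_pos rfl]
    _ ≤ cnt ω b0 i + 1 := by omega
    _ = load ω i := by rw [load_eq_cnt ω b0 i, hb0, if_pos rfl]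
    _ ≤ maxLoad ω := Finset.le_sup (mem_univ _)
  · calc load ω2 v = cnt ω b0 v := by rw [hload2, if_neg hv, Nat.add_zero]
    _ ≤ load ω v := by rw [load_eq_cnt ω b0 v]; omega
    _ ≤ maxLoad ω := Finset.le_sup (mem_univ _)

/-! ### product comparison -/

lemma prod_erase_split (f : Fin n → ℝ) (ω : Fin n → Fin n) (b0 : Fin n) (i j : Fin n)
    (hij : i ≠ j) :
    ∏ b ∈ univ.erase b0, f (ω b)
      = (f i) ^ (cnt ω b0 i) * (f j) ^ (cnt ω b0 j)
        * ∏ b ∈ (univ.erase b0).filter (fun b => ω b ≠ i ∧ ω b ≠ j), f (ω b) := by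
  rw [← prod_filter_mul_prod_filter_not (univ.erase b0) (fun b => ω b = i)]
  rw [← prod_filter_mul_prod_filter_not ((univ.erase b0).filter (fun b => ¬ ω b = i))
    (fun b => ω b = j)]
  rw [filter_filter]
  have h1 : ∏ b ∈ (univ.erase b0).filter (fun b => ω b = i), f (ω b)
      = (f i) ^ (cnt ω b0 i) := by
    rw [prod_congr rfl (fun b hb => by rw [(mem_filter.1 hb).2]), prod_const]; rfl
  have h2 : ∏ b ∈ (univ.erase b0).filter (fun b => ¬ ω b = i ∧ ω b = j), f (ω b)
      = (f j) ^ (cnt ω b0 j) := by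
    have : (univ.erase b0).filter (fun b => ¬ ω b = i ∧ ω b = j)
        = (univ.erase b0).filter (fun b => ω b = j) := by
      apply filter_congr; intro b _
      constructor
      · rintro ⟨-, h⟩; exact h
      · intro h; exact ⟨by rw [h]; exact fun hh => hij hh.symm, h⟩
    rw [this, prod_congr rfl (fun b hb => by rw [(mem_filter.1 hb).2]), prod_const]; rfl
  have h3 : ((univ.erase b0).filter fun b => ¬ω b = i ∧ ¬ω b = j)
      = ((univ.erase b0).filter fun b => ω b ≠ i ∧ ω b ≠ j) := rfl
  rw [h1, filter_filter, h2, h3, mul_assoc]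

lemma pow_mul_pow_le {x y : ℝ} (hy : 0 ≤ y) (hxy : y ≤ x) {c d : ℕ} (hcd : d ≤ c) :
    x ^ d * y ^ c ≤ x ^ c * y ^ d := by
  have hx : 0 ≤ x := le_trans hy hxy
  calc x ^ d * y ^ c = (x ^ d * y ^ d) * y ^ (c - d) := by
        rw [mul_assoc, ← pow_add]; congr 2; omega
  _ ≤ (x ^ d * y ^ d) * x ^ (c - d) := by
        apply mul_le_mul_of_nonneg_left (pow_le_pow_left₀ hy hxy _)
          (mul_nonneg (pow_nonneg hx _) (pow_nonneg hy _))
  _ = x ^ c * y ^ d := by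
        rw [mul_right_comm, ← pow_add]
        have hdc : d + (c - d) = c := by omega
        rw [hdc]

lemma prod_swap_le {f : Fin n → ℝ} (hf : ∀ v, 0 ≤ f v) {i j : Fin n} (hij : i ≠ j)
    (hfij : f j ≤ f i) (ω : Fin n → Fin n) (b0 : Fin n)
    (hcnt : cnt ω b0 j ≤ cnt ω b0 i) :
    ∏ b ∈ univ.erase b0, f ((Equiv.swap i j) (ω b)) ≤ ∏ b ∈ univ.erase b0, f (ω b) := by
  have key : ∀ b, f ((Equiv.swap i j) (ω b)) = (fun v => f ((Equiv.swap i j) v)) (ω b) :=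
    fun b => rfl
  rw [prod_erase_split f ω b0 i j hij]
  rw [prod_erase_split (fun v => f ((Equiv.swap i j) v)) ω b0 i j hij]
  have e1 : f ((Equiv.swap i j) i) = f j := by rw [Equiv.swap_apply_left]
  have e2 : f ((Equiv.swap i j) j) = f i := by rw [Equiv.swap_apply_right]
  rw [e1, e2]
  have e3 : ∏ b ∈ (univ.erase b0).filter (fun b => ω b ≠ i ∧ ω b ≠ j),
      f ((Equiv.swap i j) (ω b)) = ∏ b ∈ (univ.erase b0).filter (fun b => ω b ≠ i ∧ ω b ≠ j),
      f (ω b) := by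
    apply prod_congr rfl
    intro b hb
    obtain ⟨h1, h2⟩ := (mem_filter.1 hb).2
    rw [Equiv.swap_apply_of_ne_of_ne h1 h2]
  rw [e3]
  apply mul_le_mul_of_nonneg_right _ (prod_nonneg fun b _ => hf _)
  exact le_trans (le_of_eq (mul_comm _ _)) (pow_mul_pow_le (hf j) hfij hcnt)

/-! ### the transfer lemma -/

/-- interpolating probability vector -/
def Pfun (p : Fin n → ℝ) (i j : Fin n) (s t : ℝ) : Fin n → ℝ :=
  fun v => if v = i then t else if v = j then s - t else p v

/-- derivative of `Pfun` in `t`, coordinatewise -/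
def dfun (i j : Fin n) : Fin n → ℝ :=
  fun v => if v = i then 1 else if v = j then -1 else 0

lemma Pfun_i (p : Fin n → ℝ) (i j : Fin n) (s t : ℝ) : Pfun p i j s t i = t := by
  simp [Pfun]

lemma Pfun_j (p : Fin n → ℝ) {i j : Fin n} (hij : i ≠ j) (s t : ℝ) :
    Pfun p i j s t j = s - t := by
  simp [Pfun, Ne.symm hij]

lemma Pfun_other (p : Fin n → ℝ) {i j v : Fin n} (hvi : v ≠ i) (hvj : v ≠ j) (s t : ℝ) :
    Pfun p i j s t v = p v := by
  simp [Pfun, hvi, hvj]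

lemma hasDerivAt_Pfun (p : Fin n → ℝ) (i j : Fin n) (s t : ℝ) (v : Fin n) :
    HasDerivAt (fun t => Pfun p i j s t v) (dfun i j v) t := by
  unfold Pfun dfun
  by_cases hvi : v = i
  · simp only [if_pos hvi]; exact hasDerivAt_id t
  · by_cases hvj : v = j
    · simp only [if_neg hvi, if_pos hvj]
      simpa using (hasDerivAt_id t).const_sub s
    · simp only [if_neg hvi, if_neg hvj]
      exact hasDerivAt_const t _

lemma prod_erase_congr {f : Fin n → ℝ} {ω ω' : Fin n → Fin n} {b0 : Fin n}
    (h : ∀ b, b ≠ b0 → ω b = ω' b) :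
    ∏ b ∈ univ.erase b0, f (ω b) = ∏ b ∈ univ.erase b0, f (ω' b) :=
  prod_congr rfl fun b hb => by rw [h b (ne_of_mem_erase hb)]

lemma cnt_comp_swap (i j : Fin n) (ω : Fin n → Fin n) (b0 v : Fin n) :
    cnt (⇑(Equiv.swap i j) ∘ ω) b0 v = cnt ω b0 (Equiv.swap i j v) := by
  unfold cnt
  apply congrArg
  apply filter_congr
  intro b _
  simp only [Function.comp_apply]
  constructor
  · intro h; rw [← h, Equiv.swap_apply_self]
  · intro h; rw [h, Equiv.swap_apply_self]

set_option maxHeartbeats 1000000 in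
lemma expMaxLoad_transfer (p q : Fin n → ℝ) (hp : ∀ v, 0 ≤ p v)
    (i j : Fin n) (hij : i ≠ j)
    (hoff : ∀ v, v ≠ i → v ≠ j → q v = p v)
    (hsum : q i + q j = p i + p j)
    (h1 : q j ≤ q i) (h2 : q i ≤ p i) (h3 : p j ≤ q j) :
    expMaxLoad q ≤ expMaxLoad p := by
  set s : ℝ := p i + p j with hs
  have hs0 : 0 ≤ s := add_nonneg (hp i) (hp j)
  set F : ℝ → ℝ := fun t => expMaxLoad (Pfun p i j s t) with hF
  -- derivative of F
  set G : ℝ → ℝ := fun t => ∑ ω : Fin n → Fin n,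
      (∑ b0 : Fin n, (∏ b ∈ univ.erase b0, Pfun p i j s t (ω b)) * dfun i j (ω b0))
        * (maxLoad ω : ℝ) with hG
  have hderiv : ∀ t, HasDerivAt F (G t) t := by
    intro t
    apply HasDerivAt.fun_sum
    intro ω _
    have hprod : HasDerivAt (fun t => ∏ b, Pfun p i j s t (ω b))
        (∑ b0 : Fin n, (∏ b ∈ univ.erase b0, Pfun p i j s t (ω b)) * dfun i j (ω b0)) t := by
      have := HasDerivAt.fun_finsetProd (u := (univ : Finset (Fin n)))
        (f := fun b t => Pfun p i j s t (ω b)) (f' := fun b => dfun i j (ω b)) (x := t)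
        (fun b _ => hasDerivAt_Pfun p i j s t (ω b))
      simpa [smul_eq_mul] using this
    exact hprod.mul_const _
  -- nonnegativity of the derivative on [s/2, s]
  have hGnonneg : ∀ t, s / 2 ≤ t → t ≤ s → 0 ≤ G t := by
    intro t ht1 ht2
    have ht0 : 0 ≤ s - t := by linarith
    have hts : s - t ≤ t := by linarith
    have htt : 0 ≤ t := by linarith
    have hPnonneg : ∀ v, 0 ≤ Pfun p i j s t v := by
      intro v
      unfold Pfun
      by_cases hvi : v = i
      · simpa [hvi] using htt
      · by_cases hvj : v = j
        · simp only [if_neg hvi, if_pos hvj]; exact ht0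
        · simp only [if_neg hvi, if_neg hvj]; exact hp v
    set f : Fin n → ℝ := Pfun p i j s t with hf
    set sw : Equiv.Perm (Fin n) := Equiv.swap i j with hsw
    set g : (Fin n → Fin n) × Fin n → ℝ := fun x =>
      (∏ b ∈ univ.erase x.2, f (x.1 b)) * dfun i j (x.1 x.2) * (maxLoad x.1 : ℝ) with hg
    have hGsum : G t = ∑ x : (Fin n → Fin n) × Fin n, g x := by
      rw [hG]
      rw [Fintype.sum_prod_type]
      apply Fintype.sum_congr
      intro ω
      rw [sum_mul]
    set e1 : (Fin n → Fin n) × Fin n → (Fin n → Fin n) × Fin n :=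
      fun x => (⇑sw ∘ x.1, x.2) with he1def
    set e2 : (Fin n → Fin n) × Fin n → (Fin n → Fin n) × Fin n :=
      fun x => (Function.update x.1 x.2 (sw (x.1 x.2)), x.2) with he2def
    have he1 : Function.Involutive e1 := by
      intro x
      rw [he1def]
      refine Prod.ext ?_ rfl
      funext b
      simp [hsw, Equiv.swap_apply_self]
    have he2 : Function.Involutive e2 := by
      intro x
      rw [he2def]
      refine Prod.ext ?_ rfl
      simp only [Function.update_self]
      rw [Function.update_idem, Equiv.swap_apply_self, Function.update_eq_self]
    -- the quadruple inequality when the distinguished ball goes to bin i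
    have quad : ∀ x : (Fin n → Fin n) × Fin n, x.1 x.2 = i →
        0 ≤ g x + g (e1 x) + g (e2 x) + g (e1 (e2 x)) := by
      rintro ⟨ω, b0⟩ hb0
      simp only at hb0
      set ω2 : Fin n → Fin n := Function.update ω b0 j with hω2
      have he1x : e1 (ω, b0) = (⇑sw ∘ ω, b0) := rfl
      have he2x : e2 (ω, b0) = (ω2, b0) := by
        rw [he2def, hω2]
        simp [hb0, hsw]
      have he12x : e1 (e2 (ω, b0)) = (⇑sw ∘ ω2, b0) := by rw [he2x]
      -- evaluate the four d-factors
      have hd1 : dfun i j (ω b0) = 1 := by rw [hb0]; simp [dfun]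
      have hd2 : dfun i j ((⇑sw ∘ ω) b0) = -1 := by
        simp only [Function.comp_apply, hb0, hsw, Equiv.swap_apply_left]
        simp [dfun, Ne.symm hij]
      have hd3 : dfun i j (ω2 b0) = -1 := by
        rw [hω2]
        simp [dfun, Ne.symm hij]
      have hd4 : dfun i j ((⇑sw ∘ ω2) b0) = 1 := by
        simp only [Function.comp_apply, hω2, Function.update_self, hsw,
          Equiv.swap_apply_right]
        simp [dfun]
      -- the products
      set W1 : ℝ := ∏ b ∈ univ.erase b0, f (ω b) with hW1
      set W2 : ℝ := ∏ b ∈ univ.erase b0, f (sw (ω b)) with hW2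
      have hW2' : ∏ b ∈ univ.erase b0, f ((⇑sw ∘ ω) b) = W2 := rfl
      have hWω2 : ∏ b ∈ univ.erase b0, f (ω2 b) = W1 :=
        prod_erase_congr fun b hb => by rw [hω2, Function.update_of_ne hb]
      have hWswω2 : ∏ b ∈ univ.erase b0, f ((⇑sw ∘ ω2) b) = W2 :=
        prod_erase_congr fun b hb => by
          simp only [Function.comp_apply, hω2, Function.update_of_ne hb]
      -- maxLoads
      have hμ2 : (maxLoad (⇑sw ∘ ω) : ℝ) = (maxLoad ω : ℝ) := by
        rw [maxLoad_comp_perm]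
      have hμ4 : (maxLoad (⇑sw ∘ ω2) : ℝ) = (maxLoad ω2 : ℝ) := by
        rw [maxLoad_comp_perm]
      have hsum4 : g (ω, b0) + g (e1 (ω, b0)) + g (e2 (ω, b0)) + g (e1 (e2 (ω, b0)))
          = ((maxLoad ω : ℝ) - (maxLoad ω2 : ℝ)) * (W1 - W2) := by
        rw [he12x, he1x, he2x]
        simp only [hg]
        rw [hd1, hd2, hd3, hd4, hW2', hWω2, hWswω2, hμ2, hμ4, ← hW1]
        ring
      rw [hsum4]
      -- sign analysis
      rcases le_total (cnt ω b0 j) (cnt ω b0 i) with hc | hc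
      · have hμle : maxLoad ω2 ≤ maxLoad ω := maxLoad_update_le ω b0 hb0 hc
        have hWle : W2 ≤ W1 := by
          rw [hW1, hW2, hsw]
          exact prod_swap_le hPnonneg hij
            (by rw [hf, Pfun_j p hij, Pfun_i]; exact hts) ω b0 hc
        have : (0:ℝ) ≤ (maxLoad ω : ℝ) - (maxLoad ω2 : ℝ) := by
          have h' := (Nat.cast_le (α := ℝ)).2 hμle; linarith
        exact mul_nonneg this (by linarith)
      · have hμle : maxLoad ω ≤ maxLoad ω2 := by
          have h := maxLoad_update_le (i := j) (j := i) ω2 b0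
            (by rw [hω2]; simp) ?_
          · rwa [hω2, Function.update_idem, ← hb0, Function.update_eq_self] at h
          · rw [hω2, cnt_update, cnt_update]; exact hc
        have hWle : W1 ≤ W2 := by
          have hkey : cnt (⇑(Equiv.swap i j) ∘ ω) b0 j ≤ cnt (⇑(Equiv.swap i j) ∘ ω) b0 i := by
            rw [cnt_comp_swap, cnt_comp_swap, Equiv.swap_apply_left, Equiv.swap_apply_right]
            exact hc
          have h := prod_swap_le hPnonneg hij
            (by rw [hf, Pfun_j p hij, Pfun_i]; exact hts) (⇑(Equiv.swap i j) ∘ ω) b0 hkey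
          have heq : ∏ b ∈ univ.erase b0, f ((Equiv.swap i j) ((⇑(Equiv.swap i j) ∘ ω) b))
              = ∏ b ∈ univ.erase b0, f (ω b) :=
            prod_erase_congr fun b _ => by
              simp only [Function.comp_apply, Equiv.swap_apply_self]
          rw [heq] at h
          simp only [Function.comp_apply] at h
          rw [hW1, hW2, hsw]
          exact h
        have hcast : (maxLoad ω : ℝ) ≤ (maxLoad ω2 : ℝ) := Nat.cast_le.2 hμle
        have := mul_nonneg (sub_nonneg.2 hcast) (sub_nonneg.2 hWle)
        calc (0:ℝ) ≤ ((maxLoad ω2 : ℝ) - (maxLoad ω : ℝ)) * (W2 - W1) := this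
        _ = ((maxLoad ω : ℝ) - (maxLoad ω2 : ℝ)) * (W1 - W2) := by ring
    -- every quadruple is nonnegative
    have quad' : ∀ x : (Fin n → Fin n) × Fin n,
        0 ≤ g x + g (e1 x) + g (e2 x) + g (e1 (e2 x)) := by
      rintro ⟨ω, b0⟩
      by_cases hb0 : ω b0 = i
      · exact quad _ hb0
      by_cases hb0' : ω b0 = j
      · have hx2 : (e2 (ω, b0)).1 (e2 (ω, b0)).2 = i := by
          rw [he2def]
          simp only [Function.update_self, hb0', hsw, Equiv.swap_apply_right]
        have h := quad (e2 (ω, b0)) hx2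
        have he2e2 : e2 (e2 (ω, b0)) = (ω, b0) := he2 _
        rw [he2e2] at h
        linarith
      · -- neither i nor j : all four terms vanish
        have hzero : ∀ y : (Fin n → Fin n) × Fin n, y.1 y.2 ∉ ({i, j} : Set (Fin n)) →
            g y = 0 := by
          rintro ⟨ω', b0'⟩ hy
          simp only [Set.mem_insert_iff, Set.mem_singleton_iff, not_or] at hy
          have : dfun i j (ω' b0') = 0 := by simp [dfun, hy.1, hy.2]
          rw [hg]
          simp only
          rw [this]
          ring
        have hv : ω b0 ∉ ({i, j} : Set (Fin n)) := by simp [hb0, hb0']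
        have z1 : g (ω, b0) = 0 := hzero _ hv
        have z2 : g (e1 (ω, b0)) = 0 := by
          apply hzero
          simp only [he1def, Function.comp_apply]
          rwa [hsw, Equiv.swap_apply_of_ne_of_ne hb0 hb0']
        have z3 : g (e2 (ω, b0)) = 0 := by
          apply hzero
          simp only [he2def, Function.update_self]
          rwa [hsw, Equiv.swap_apply_of_ne_of_ne hb0 hb0']
        have z4 : g (e1 (e2 (ω, b0))) = 0 := by
          apply hzero
          simp only [he1def, he2def, Function.comp_apply, Function.update_self]
          rw [hsw, Equiv.swap_apply_of_ne_of_ne hb0 hb0',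
            Equiv.swap_apply_of_ne_of_ne hb0 hb0']
          simp [hb0, hb0']
        rw [z1, z2, z3, z4]
        norm_num
    -- sum the quadruples
    have hb1 : Function.Bijective e1 := he1.bijective
    have hb2 : Function.Bijective e2 := he2.bijective
    have hb12 : Function.Bijective (e1 ∘ e2) := hb1.comp hb2
    have hsum1 : ∑ x, g (e1 x) = ∑ x, g x :=
      Fintype.sum_bijective e1 hb1 _ _ fun x => rfl
    have hsum2 : ∑ x, g (e2 x) = ∑ x, g x :=
      Fintype.sum_bijective e2 hb2 _ _ fun x => rfl
    have hsum12 : ∑ x, g (e1 (e2 x)) = ∑ x, g x :=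
      Fintype.sum_bijective (e1 ∘ e2) hb12 _ _ fun x => rfl
    have h4 : 0 ≤ ∑ x : (Fin n → Fin n) × Fin n,
        (g x + g (e1 x) + g (e2 x) + g (e1 (e2 x))) :=
      sum_nonneg fun x _ => quad' x
    rw [sum_add_distrib, sum_add_distrib, sum_add_distrib, hsum1, hsum2, hsum12] at h4
    rw [hGsum]
    linarith
  -- monotonicity of F on [s/2, s]
  have hmono : MonotoneOn F (Set.Icc (s / 2) s) := by
    apply monotoneOn_of_deriv_nonneg (convex_Icc _ _)
    · exact (Differentiable.continuous fun t => (hderiv t).differentiableAt).continuousOn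
    · exact fun x _ => (hderiv x).differentiableAt.differentiableWithinAt
    · intro x hx
      rw [interior_Icc] at hx
      rw [(hderiv x).deriv]
      exact hGnonneg x (le_of_lt hx.1) (le_of_lt hx.2)
  -- endpoints
  have hFp : F (p i) = expMaxLoad p := by
    have hPp : Pfun p i j s (p i) = p := by
      funext v
      by_cases hvi : v = i
      · rw [hvi, Pfun_i]
      · by_cases hvj : v = j
        · rw [hvj, Pfun_j p hij]; rw [hs]; ring
        · rw [Pfun_other p hvi hvj]
    show expMaxLoad (Pfun p i j s (p i)) = expMaxLoad p
    rw [hPp]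
  have hFq : F (q i) = expMaxLoad q := by
    have hPq : Pfun p i j s (q i) = q := by
      funext v
      by_cases hvi : v = i
      · rw [hvi, Pfun_i]
      · by_cases hvj : v = j
        · rw [hvj, Pfun_j p hij]; linarith [hsum, hs]
        · rw [Pfun_other p hvi hvj, hoff v hvi hvj]
    show expMaxLoad (Pfun p i j s (q i)) = expMaxLoad q
    rw [hPq]
  have hqmem : q i ∈ Set.Icc (s / 2) s := by
    constructor
    · linarith [hsum, hs]
    · linarith [hsum, hs, hp j]
  have hpmem : p i ∈ Set.Icc (s / 2) s := by
    constructor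
    · linarith [hs]
    · linarith [hs, hp j]
  rw [← hFp, ← hFq]
  exact hmono hqmem hpmem h2

/-! ### windows and suffix sets -/

/-- indices in `[a, a+k)` -/
def win (n a k : ℕ) : Finset (Fin n) :=
  univ.filter fun u => a ≤ (u : ℕ) ∧ (u : ℕ) < a + k

/-- indices in `[n-m, n)` : the last `m` indices (for `m ≤ n`) -/
def suf (n m : ℕ) : Finset (Fin n) :=
  univ.filter fun u => n - m ≤ (u : ℕ)

lemma mem_win {a k : ℕ} {u : Fin n} : u ∈ win n a k ↔ a ≤ (u : ℕ) ∧ (u : ℕ) < a + k := by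
  simp [win]

lemma mem_suf {m : ℕ} {u : Fin n} : u ∈ suf n m ↔ n - m ≤ (u : ℕ) := by
  simp [suf]

lemma card_win {a k : ℕ} (h : a + k ≤ n) : (win n a k).card = k := by
  rw [win]
  apply Finset.card_eq_of_bijective (fun i hi => ⟨a + i, by omega⟩)
  · intro u hu
    rw [mem_filter] at hu
    exact ⟨(u : ℕ) - a, by omega, by apply Fin.ext; simp; omega⟩
  · intro i hi
    rw [mem_filter]
    constructor
    · exact mem_univ _
    · simp; omega
  · intro i j hi hj hij
    have := Fin.mk.injEq (a + i) _ (a + j) _ ▸ hij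
    simpa using Fin.val_eq_val _ _ |>.2 hij |> fun h => by simpa using h

lemma suf_eq_win {m : ℕ} (hm : m ≤ n) : suf n m = win n (n - m) m := by
  ext u
  rw [mem_suf, mem_win]
  have := u.2
  omega

lemma card_suf {m : ℕ} (hm : m ≤ n) : (suf n m).card = m := by
  rw [suf_eq_win hm, card_win (by omega)]

lemma win_insert_left {a k : ℕ} (h : a + k + 1 ≤ n) :
    win n a (k + 1) = insert (⟨a, by omega⟩ : Fin n) (win n (a + 1) k) := by
  ext u
  rw [mem_win, mem_insert, mem_win, Fin.ext_iff]
  simp only []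
  omega

lemma win_insert_right {a k : ℕ} (h : a + k + 1 ≤ n) :
    win n a (k + 1) = insert (⟨a + k, by omega⟩ : Fin n) (win n a k) := by
  ext u
  rw [mem_win, mem_insert, mem_win, Fin.ext_iff]
  simp only []
  omega

lemma win_zero (a : ℕ) : win n a 0 = ∅ := by
  ext u
  rw [mem_win]
  simp

lemma sum_win_shift {q : Fin n → ℝ} (hq : Antitone q) {a k : ℕ} (h : a + k + 1 ≤ n) :
    ∑ u ∈ win n (a + 1) k, q u ≤ ∑ u ∈ win n a k, q u := by
  cases k with
  | zero => rw [win_zero, win_zero]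
  | succ k =>
    have hL : win n (a+1) (k+1) = insert (⟨a + 1 + k, by omega⟩ : Fin n) (win n (a+1) k) :=
      win_insert_right (by omega)
    have hR : win n a (k+1) = insert (⟨a, by omega⟩ : Fin n) (win n (a+1) k) :=
      win_insert_left (by omega)
    rw [hL, hR, sum_insert (by simp [mem_win]), sum_insert (by simp [mem_win])]
    have : q (⟨a + 1 + k, by omega⟩ : Fin n) ≤ q (⟨a, by omega⟩ : Fin n) := by
      apply hq
      rw [Fin.le_def]
      simp
      omega
    linarith

/-! ### Robin Hood moves -/

lemma expMaxLoad_robinhood (p : Fin n → ℝ) (hp : ∀ v, 0 ≤ p v) (a b : Fin n) (hab : a ≠ b)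
    (v : ℝ) (hvb : p b ≤ v) (hva : v ≤ p a) :
    expMaxLoad (Function.update (Function.update p a v) b (p a + p b - v)) ≤ expMaxLoad p := by
  set w : ℝ := p a + p b - v with hw
  set p' : Fin n → ℝ := Function.update (Function.update p a v) b w with hp'
  have hba : b ≠ a := Ne.symm hab
  have hp'a : p' a = v := by rw [hp', Function.update_of_ne hab, Function.update_self]
  have hp'b : p' b = w := by rw [hp', Function.update_self]
  have hp'off : ∀ u, u ≠ a → u ≠ b → p' u = p u := fun u hua hub => by
    rw [hp', Function.update_of_ne hub, Function.update_of_ne hua]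
  rcases le_total w v with hwv | hvw
  · -- w ≤ v : direct transfer with i = a, j = b
    apply expMaxLoad_transfer p p' hp a b hab hp'off
    · rw [hp'a, hp'b, hw]; ring
    · rw [hp'a, hp'b]; exact hwv
    · rw [hp'a]; exact hva
    · rw [hp'b, hw]; linarith
  · -- v ≤ w : compose with the swap of a and b
    have hperm : expMaxLoad p' = expMaxLoad (p' ∘ ⇑(Equiv.swap a b)) :=
      (expMaxLoad_comp_perm (Equiv.swap a b) p').symm
    rw [hperm]
    apply expMaxLoad_transfer p _ hp a b hab
    · intro u hua hub
      simp only [Function.comp_apply]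
      rw [Equiv.swap_apply_of_ne_of_ne hua hub]
      exact hp'off u hua hub
    · simp only [Function.comp_apply, Equiv.swap_apply_left, Equiv.swap_apply_right]
      rw [hp'a, hp'b, hw]; ring
    · simp only [Function.comp_apply, Equiv.swap_apply_left, Equiv.swap_apply_right]
      rw [hp'a, hp'b]; exact hvw
    · simp only [Function.comp_apply, Equiv.swap_apply_left]
      rw [hp'b, hw]; linarith
    · simp only [Function.comp_apply, Equiv.swap_apply_right]
      rw [hp'a]; exact hvb

/-! ### kMax under permutations -/

lemma kMax_comp_perm (x : Fin n → ℝ) (σ : Equiv.Perm (Fin n)) (S : Finset (Fin n)) (k : ℕ)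
    (hk : k ≤ S.card) :
    kMax (x ∘ ⇑σ) S k = kMax x (S.image ⇑σ) k := by
  apply le_antisymm
  · obtain ⟨s, hsS, hscard, hseq⟩ := kMax_spec (x := x ∘ ⇑σ) (S := S) (k := k) hk
    rw [hseq]
    have : ∑ i ∈ s, (x ∘ ⇑σ) i = ∑ i ∈ s.image ⇑σ, x i := by
      rw [sum_image (fun u _ v _ h => σ.injective h)]
      rfl
    rw [this]
    exact le_kMax (image_subset_image hsS) (by rw [card_image_of_injective _ σ.injective, hscard])
  · have hk' : k ≤ (S.image ⇑σ).card := by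
      rwa [card_image_of_injective _ σ.injective]
    obtain ⟨s, hsS, hscard, hseq⟩ := kMax_spec (x := x) (S := S.image ⇑σ) (k := k) hk'
    rw [hseq]
    have : ∑ i ∈ s, x i = ∑ i ∈ s.image ⇑σ.symm, (x ∘ ⇑σ) i := by
      rw [sum_image (fun u _ v _ h => σ.symm.injective h)]
      apply sum_congr rfl
      intro u _
      simp
    rw [this]
    apply le_kMax _ (by rw [card_image_of_injective _ σ.symm.injective, hscard])
    intro u hu
    obtain ⟨u', hu', rfl⟩ := mem_image.1 hu
    obtain ⟨u'', hu'', rfl⟩ := mem_image.1 (hsS hu')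
    simpa using hu''

/-! ### the main induction -/

set_option maxHeartbeats 1600000 in
lemma main_induction {q : Fin n → ℝ} (hq : Antitone q) (hq0 : ∀ v, 0 ≤ q v) :
    ∀ m : ℕ, m ≤ n → ∀ p : Fin n → ℝ, (∀ v, 0 ≤ p v) →
      (∀ u : Fin n, (u : ℕ) < n - m → p u = q u) →
      (∑ u ∈ suf n m, p u = ∑ u ∈ suf n m, q u) →
      (∀ k : ℕ, k ≤ m → (∑ u ∈ win n (n - m) k, q u) ≤ kMax p (suf n m) k) →
      expMaxLoad q ≤ expMaxLoad p := by
  intro m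
  induction m with
  | zero =>
    intro _ p _ hpre _ _
    have hpq : p = q := funext fun u => hpre u (by have := u.2; omega)
    rw [hpq]
  | succ m ih =>
    intro hm1 p hp0 hpre hsum hmaj
    set J : ℕ := n - (m + 1) with hJ
    have hJn : J < n := by omega
    have hJ1 : n - m = J + 1 := by omega
    set jF : Fin n := ⟨J, hJn⟩ with hjF
    have hjFval : (jF : ℕ) = J := rfl
    set v : ℝ := q jF with hv
    set Sm1 : Finset (Fin n) := suf n (m + 1) with hSm1
    have hjFSm1 : jF ∈ Sm1 := by rw [hSm1, mem_suf]
    have hSm1card : Sm1.card = m + 1 := card_suf hm1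
    have hvalSm1 : ∀ u, u ∈ Sm1 → J ≤ (u : ℕ) := fun u hu => by
      rw [hSm1, mem_suf] at hu; omega
    have hqv : ∀ u, u ∈ Sm1 → q u ≤ v := by
      intro u hu
      apply hq
      rw [Fin.le_def]
      exact hvalSm1 u hu
    -- existence of a suffix element with value ≥ v
    have hwin1 : win n J 1 = {jF} := by
      ext u
      rw [mem_win, mem_singleton, Fin.ext_iff, hjFval]
      omega
    have hstep1 : v ≤ kMax p Sm1 1 := by
      have h := hmaj 1 (by omega)
      rw [hJ, hwin1, sum_singleton] at h
      exact h
    obtain ⟨s1, hs1S, hs1card, hs1eq⟩ :=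
      kMax_spec (x := p) (S := Sm1) (k := 1) (by omega)
    obtain ⟨a1, rfl⟩ := card_eq_one.1 hs1card
    have ha1S : a1 ∈ Sm1 := hs1S (mem_singleton_self a1)
    have ha1v : v ≤ p a1 := by
      rw [sum_singleton] at hs1eq
      rw [← hs1eq]
      exact hstep1
    -- minimal such element a
    obtain ⟨a, haA, hamin⟩ := exists_min_image (Sm1.filter fun u => v ≤ p u) p
      ⟨a1, mem_filter.2 ⟨ha1S, ha1v⟩⟩
    have haS : a ∈ Sm1 := (mem_filter.1 haA).1
    have hva : v ≤ p a := (mem_filter.1 haA).2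
    -- existence & maximal element b with value ≤ v
    have hBne : (Sm1.filter fun u => p u ≤ v).Nonempty := by
      by_contra hne
      rw [not_nonempty_iff_eq_empty, filter_eq_empty_iff] at hne
      have hstrict : ∀ u ∈ Sm1, q u < p u := by
        intro u hu
        have := hne hu
        have := hqv u hu
        linarith [not_le.1 (hne hu)]
      have hlt : ∑ u ∈ Sm1, q u < ∑ u ∈ Sm1, p u :=
        sum_lt_sum_of_nonempty ⟨jF, hjFSm1⟩ hstrict
      linarith [hsum]
    obtain ⟨b, hbB, hbmax⟩ := exists_max_image (Sm1.filter fun u => p u ≤ v) p hBne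
    have hbS : b ∈ Sm1 := (mem_filter.1 hbB).1
    have hpbv : p b ≤ v := (mem_filter.1 hbB).2
    -- the transfer
    set w : ℝ := p a + p b - v with hw
    set p' : Fin n → ℝ := Function.update (Function.update p a v) b w with hp'
    have hp'b : p' b = w := by rw [hp', Function.update_self]
    have hpab : a = b → p a = v := by
      intro hab
      have : p a ≤ v := hab ▸ hpbv
      linarith
    have hp'a : p' a = v := by
      by_cases hab : b = a
      · rw [hp', hab, Function.update_idem, Function.update_self, hw, hab,
          hpab hab.symm]
        ring
      · rw [hp', Function.update_of_ne (Ne.symm hab), Function.update_self]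
    have hp'off : ∀ u, u ≠ a → u ≠ b → p' u = p u := fun u hua hub => by
      rw [hp', Function.update_of_ne hub, Function.update_of_ne hua]
    have hv0 : 0 ≤ v := hq0 jF
    have hw0 : 0 ≤ w := by rw [hw]; linarith [hp0 b]
    have hp'0 : ∀ u, 0 ≤ p' u := by
      intro u
      by_cases hub : u = b
      · rw [hub, hp'b]; exact hw0
      by_cases hua : u = a
      · rw [hua, hp'a]; exact hv0
      · rw [hp'off u hua hub]; exact hp0 u
    have hEp' : expMaxLoad p' ≤ expMaxLoad p := by
      by_cases hab : a = b
      · have hpav := hpab hab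
        have : p' = p := by
          rw [hp', hab, Function.update_idem]
          have : w = p b := by rw [hw, ← hab, hpav]; ring
          rw [this, Function.update_eq_self]
        rw [this]
      · exact expMaxLoad_robinhood p hp0 a b hab v hpbv hva
    -- permute v into position jF
    set σ : Equiv.Perm (Fin n) := Equiv.swap jF a with hσ
    set p'' : Fin n → ℝ := p' ∘ ⇑σ with hp''
    have hEp'' : expMaxLoad p'' = expMaxLoad p' := expMaxLoad_comp_perm σ p'
    have hp''0 : ∀ u, 0 ≤ p'' u := fun u => hp'0 (σ u)
    have hbval : J ≤ (b : ℕ) := hvalSm1 b hbS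
    have haval : J ≤ (a : ℕ) := hvalSm1 a haS
    have hp''jF : p'' jF = v := by
      rw [hp'', hσ]
      simp only [Function.comp_apply, Equiv.swap_apply_left]
      exact hp'a
    -- prefix condition
    have hpre'' : ∀ u : Fin n, (u : ℕ) < n - m → p'' u = q u := by
      intro u hu
      rw [hJ1] at hu
      by_cases hujF : u = jF
      · rw [hujF, hp''jF, hv]
      · have huJ : (u : ℕ) < J := by
          rcases Nat.lt_or_ge (u : ℕ) J with h | h
          · exact h
          · exfalso; exact hujF (Fin.ext (by omega))
        have hua : u ≠ a := fun h => by rw [h] at huJ; omega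
        have hub : u ≠ b := fun h => by rw [h] at huJ; omega
        rw [hp'', hσ]
        simp only [Function.comp_apply]
        rw [Equiv.swap_apply_of_ne_of_ne hujF hua, hp'off u hua hub]
        exact hpre u (by omega)
    -- suffix sum condition
    have hSm1insert : Sm1 = insert jF (suf n m) := by
      ext u
      rw [hSm1, mem_suf, mem_insert, mem_suf, Fin.ext_iff, hjFval]
      have := u.2
      omega
    have hjFnotSm : jF ∉ suf n m := by rw [mem_suf, hjFval]; omega
    have hsum1 : ∑ u ∈ Sm1, p'' u = ∑ u ∈ Sm1, p' u := by
      apply Finset.sum_equiv σ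
      · intro u
        constructor
        · intro hu
          by_cases h1 : u = jF
          · rw [h1, hσ]; simpa [Equiv.swap_apply_left] using haS
          by_cases h2 : u = a
          · rw [h2, hσ]; simpa [Equiv.swap_apply_right] using hjFSm1
          · rw [hσ, Equiv.swap_apply_of_ne_of_ne h1 h2]; exact hu
        · intro hu
          by_cases h1 : u = jF
          · rw [h1] at hu ⊢; exact hjFSm1
          by_cases h2 : u = a
          · rw [h2]; exact haS
          · rw [hσ, Equiv.swap_apply_of_ne_of_ne h1 h2] at hu; exact hu
      · intro u _
        rfl
    have hsum2 : ∑ u ∈ Sm1, p' u = ∑ u ∈ Sm1, p u := by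
      by_cases hab : a = b
      · have hpav := hpab hab
        have hwpb : w = p b := by rw [hw, ← hab, hpav]; ring
        rw [← Finset.add_sum_erase Sm1 p' hbS, ← Finset.add_sum_erase Sm1 p hbS, hp'b, hwpb]
        congr 1
        apply sum_congr rfl
        intro u hu
        exact hp'off u (fun h => (mem_erase.1 hu).1 (h.trans hab)) (mem_erase.1 hu).1
      · have hbS' : b ∈ Sm1 := hbS
        have haS' : a ∈ Sm1.erase b := mem_erase.2 ⟨hab, haS⟩
        rw [← Finset.add_sum_erase Sm1 p' hbS, ← Finset.add_sum_erase Sm1 p hbS,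
          ← Finset.add_sum_erase _ p' haS', ← Finset.add_sum_erase _ p haS']
        have heq : ∑ u ∈ (Sm1.erase b).erase a, p' u = ∑ u ∈ (Sm1.erase b).erase a, p u := by
          apply sum_congr rfl
          intro u hu
          exact hp'off u (mem_erase.1 hu).1 (mem_erase.1 (mem_erase.1 hu).2).1
        rw [heq, hp'b, hp'a, hw]
        ring
    have hsum'' : ∑ u ∈ suf n m, p'' u = ∑ u ∈ suf n m, q u := by
      have e1 : ∑ u ∈ Sm1, p'' u = p'' jF + ∑ u ∈ suf n m, p'' u := by
        rw [hSm1insert, sum_insert hjFnotSm]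
      have e2 : ∑ u ∈ Sm1, q u = q jF + ∑ u ∈ suf n m, q u := by
        rw [hSm1insert, sum_insert hjFnotSm]
      rw [hsum1, hsum2] at e1
      rw [hp''jF, hv] at e1
      linarith [hsum, e1, e2]
    -- majorization condition
    have hmaj'' : ∀ k : ℕ, k ≤ m →
        (∑ u ∈ win n (n - m) k, q u) ≤ kMax p'' (suf n m) k := by
      intro k hk
      have hkcard : k ≤ (suf n m).card := by rw [card_suf (by omega)]; exact hk
      have hkM : kMax p'' (suf n m) k = kMax p' ((suf n m).image ⇑σ) k :=
        kMax_comp_perm p' σ (suf n m) k hkcard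
      have himg : (suf n m).image ⇑σ = Sm1.erase a := by
        ext u
        rw [mem_image]
        constructor
        · rintro ⟨x, hx, rfl⟩
          have hxval : J + 1 ≤ (x : ℕ) := by rw [mem_suf] at hx; omega
          have hxjF : x ≠ jF := fun h => by rw [h] at hxval; simp [hjFval] at hxval
          by_cases hxa : x = a
          · rw [hxa, hσ, Equiv.swap_apply_right, mem_erase]
            refine ⟨fun h => ?_, hjFSm1⟩
            have hax : J + 1 ≤ (a : ℕ) := hxa ▸ hxval
            rw [← h] at hax
            omega
          · rw [hσ, Equiv.swap_apply_of_ne_of_ne hxjF hxa, mem_erase]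
            refine ⟨hxa, ?_⟩
            rw [hSm1, mem_suf]
            omega
        · intro hu
          obtain ⟨hua, huS⟩ := mem_erase.1 hu
          by_cases hujF : u = jF
          · refine ⟨a, ?_, ?_⟩
            · rw [mem_suf]
              have : a ≠ jF := fun h => hua (hujF.trans h.symm)
              have : J ≠ (a : ℕ) := fun h => this (Fin.ext h.symm)
              omega
            · rw [hσ, Equiv.swap_apply_right, hujF]
          · refine ⟨u, ?_, ?_⟩
            · rw [mem_suf]
              have : J ≠ (u : ℕ) := fun h => hujF (Fin.ext h.symm)
              have := hvalSm1 u huS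
              omega
            · rw [hσ, Equiv.swap_apply_of_ne_of_ne hujF hua]
      rw [hkM, himg]
      -- now show  T_k ≤ kMax p' (Sm1.erase a) k
      rcases Nat.eq_zero_or_pos k with hk0 | hk1
      · rw [hk0, hJ1, win_zero, sum_empty, kMax_zero]
      have hconc : ∀ s : Finset (Fin n), s ⊆ Sm1.erase a → s.card = k →
          (∑ u ∈ win n (n - m) k, q u) ≤ ∑ u ∈ s, p' u →
          (∑ u ∈ win n (n - m) k, q u) ≤ kMax p' (Sm1.erase a) k :=
        fun s h1 h2 h3 => le_trans h3 (le_kMax h1 h2)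
      have hTle : ∑ u ∈ win n (n - m) k, q u ≤ ∑ u ∈ win n J k, q u := by
        rw [hJ1]
        exact sum_win_shift hq (by omega)
      have hbase : ∑ u ∈ win n J k, q u ≤ kMax p Sm1 k := by
        exact hmaj k (by omega)
      obtain ⟨D, hDS, hDcard, hDeq⟩ :=
        kMax_spec (x := p) (S := Sm1) (k := k) (by omega)
      have hDp : ∑ u ∈ win n (n - m) k, q u ≤ ∑ u ∈ D, p u := by
        rw [← hDeq]; exact le_trans hTle hbase
      by_cases haD : a ∈ D
      · -- need the exchange element e
        have hSDne : (Sm1 \ D).Nonempty := by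
          rcases (Sm1 \ D).eq_empty_or_nonempty with h | h
          · exfalso
            have hsub : Sm1 ⊆ D := fun u hu => by
              by_contra hcon
              exact absurd (mem_sdiff.2 ⟨hu, hcon⟩) (by rw [h]; exact notMem_empty u)
            have := card_le_card hsub
            omega
          · exact h
        obtain ⟨e, heSD, hemax⟩ := exists_max_image (Sm1 \ D) p hSDne
        obtain ⟨heS, heD⟩ := mem_sdiff.1 heSD
        have hea : e ≠ a := fun h => heD (h ▸ haD)
        have hEXCH : kMax p Sm1 (k + 1) ≤ ∑ u ∈ D, p u + p e := by
          obtain ⟨E, hES, hEcard, hEeq⟩ :=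
            kMax_spec (x := p) (S := Sm1) (k := k + 1) (by omega)
          have hxE : ∃ x, x ∈ E ∧ x ∉ D := by
            by_contra hcon
            push_neg at hcon
            have : E ⊆ D := fun u hu => hcon u hu
            have := card_le_card this
            omega
          obtain ⟨x, hxE, hxD⟩ := hxE
          have h1 : ∑ u ∈ E, p u = p x + ∑ u ∈ E.erase x, p u :=
            (Finset.add_sum_erase E p hxE).symm
          have h2 : ∑ u ∈ E.erase x, p u ≤ kMax p Sm1 k :=
            le_kMax (subset_trans (erase_subset x E) hES)
              (by rw [card_erase_of_mem hxE]; omega)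
          have h3 : p x ≤ p e := hemax x (mem_sdiff.2 ⟨hES hxE, hxD⟩)
          rw [hDeq] at h2
          rw [hEeq]
          linarith [h1, h2, h3]
        have hvT : v + ∑ u ∈ win n (n - m) k, q u ≤ kMax p Sm1 (k + 1) := by
          have h := hmaj (k + 1) (by omega)
          have hwins : win n J (k + 1) = insert jF (win n (J + 1) k) := by
            have := win_insert_left (n := n) (a := J) (k := k) (by omega)
            rw [this]
          rw [hwins, sum_insert (by rw [mem_win]; simp [hjFval])] at h
          rw [hJ1]
          exact h
        by_cases hbD : b ∈ D
        · -- witness : insert e (D.erase a)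
          have hs_sub : insert e (D.erase a) ⊆ Sm1.erase a :=
            insert_subset (mem_erase.2 ⟨hea, heS⟩) (erase_subset_erase a hDS)
          have hs_card : (insert e (D.erase a)).card = k := by
            rw [card_insert_of_notMem (fun h => heD (mem_of_mem_erase h)),
              card_erase_of_mem haD]
            omega
          apply hconc _ hs_sub hs_card
          have heb : e ≠ b := fun h => heD (h ▸ hbD)
          have hXsum : ∑ u ∈ insert e (D.erase a), p' u = ∑ u ∈ D, p u + p e - v := by
            rw [sum_insert (fun h => heD (mem_of_mem_erase h))]
            rw [hp'off e hea heb]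
            have hDer : ∑ u ∈ D.erase a, p' u = ∑ u ∈ D, p u - v := by
              by_cases hab : a = b
              · have hpav := hpab hab
                have heq2 : ∑ u ∈ D.erase a, p' u = ∑ u ∈ D.erase a, p u := by
                  apply sum_congr rfl
                  intro u hu
                  exact hp'off u (mem_erase.1 hu).1
                    (fun h => (mem_erase.1 hu).1 (h.trans hab.symm))
                rw [heq2, ← Finset.add_sum_erase D p haD, hpav]
                ring
              · have hbDa : b ∈ D.erase a := mem_erase.2 ⟨fun h => hab h.symm, hbD⟩
                rw [← Finset.add_sum_erase _ p' hbDa, hp'b]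
                have heq2 : ∑ u ∈ (D.erase a).erase b, p' u
                    = ∑ u ∈ (D.erase a).erase b, p u := by
                  apply sum_congr rfl
                  intro u hu
                  exact hp'off u (mem_erase.1 (mem_erase.1 hu).2).1 (mem_erase.1 hu).1
                rw [heq2]
                have : ∑ u ∈ D, p u = p a + (p b + ∑ u ∈ (D.erase a).erase b, p u) := by
                  rw [Finset.add_sum_erase _ p hbDa, Finset.add_sum_erase D p haD]
                rw [this, hw]
                ring
            rw [hDer]
            ring
          rw [hXsum]
          linarith [hvT, hEXCH]
        · -- b ∉ D
          have hab : a ≠ b := fun h => hbD (h ▸ haD)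
          by_cases hpe : p e ≤ p b
          · -- witness : insert b (D.erase a)
            have hs_sub : insert b (D.erase a) ⊆ Sm1.erase a :=
              insert_subset (mem_erase.2 ⟨Ne.symm hab, hbS⟩) (erase_subset_erase a hDS)
            have hs_card : (insert b (D.erase a)).card = k := by
              rw [card_insert_of_notMem (fun h => hbD (mem_of_mem_erase h)),
                card_erase_of_mem haD]
              omega
            apply hconc _ hs_sub hs_card
            have hXsum : ∑ u ∈ insert b (D.erase a), p' u
                = ∑ u ∈ D, p u + p b - v := by
              rw [sum_insert (fun h => hbD (mem_of_mem_erase h)), hp'b]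
              have heq2 : ∑ u ∈ D.erase a, p' u = ∑ u ∈ D.erase a, p u := by
                apply sum_congr rfl
                intro u hu
                exact hp'off u (mem_erase.1 hu).1 (fun h => hbD (h ▸ mem_of_mem_erase hu))
              rw [heq2, ← Finset.add_sum_erase D p haD, hw]
              ring
            rw [hXsum]
            linarith [hvT, hEXCH, hpe]
          · -- p b < p e, hence v ≤ p e and p a ≤ p e
            have hve : v ≤ p e := by
              by_contra hcon
              push_neg at hcon
              have : p e ≤ p b := hbmax e (mem_filter.2 ⟨heS, le_of_lt hcon⟩)
              exact hpe this
            have hae : p a ≤ p e := hamin e (mem_filter.2 ⟨heS, hve⟩)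
            have heb : e ≠ b := fun h => hpe (le_of_eq (congrArg p h))
            have hs_sub : insert e (D.erase a) ⊆ Sm1.erase a :=
              insert_subset (mem_erase.2 ⟨hea, heS⟩) (erase_subset_erase a hDS)
            have hs_card : (insert e (D.erase a)).card = k := by
              rw [card_insert_of_notMem (fun h => heD (mem_of_mem_erase h)),
                card_erase_of_mem haD]
              omega
            apply hconc _ hs_sub hs_card
            have hXsum : ∑ u ∈ insert e (D.erase a), p' u
                = ∑ u ∈ D, p u - p a + p e := by
              rw [sum_insert (fun h => heD (mem_of_mem_erase h)), hp'off e hea heb]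
              have heq2 : ∑ u ∈ D.erase a, p' u = ∑ u ∈ D.erase a, p u := by
                apply sum_congr rfl
                intro u hu
                exact hp'off u (mem_erase.1 hu).1 (fun h => hbD (h ▸ mem_of_mem_erase hu))
              rw [heq2, ← Finset.add_sum_erase D p haD]
              ring
            rw [hXsum]
            linarith [hDp, hae]
      · -- a ∉ D : witness D itself
        have hs_sub : D ⊆ Sm1.erase a := subset_erase.2 ⟨hDS, haD⟩
        apply hconc D hs_sub hDcard
        by_cases hbD : b ∈ D
        · have hab : a ≠ b := fun h => haD (h ▸ hbD)
          have hXsum : ∑ u ∈ D, p' u = ∑ u ∈ D, p u + p a - v := by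
            rw [← Finset.add_sum_erase D p' hbD, hp'b]
            have heq2 : ∑ u ∈ D.erase b, p' u = ∑ u ∈ D.erase b, p u := by
              apply sum_congr rfl
              intro u hu
              exact hp'off u (fun h => haD (h ▸ mem_of_mem_erase hu)) (mem_erase.1 hu).1
            rw [heq2, ← Finset.add_sum_erase D p hbD, hw]
            ring
          rw [hXsum]
          linarith [hDp, hva]
        · have hXsum : ∑ u ∈ D, p' u = ∑ u ∈ D, p u := by
            apply sum_congr rfl
            intro u hu
            exact hp'off u (fun h => haD (h ▸ hu)) (fun h => hbD (h ▸ hu))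
          rw [hXsum]
          exact hDp
    -- apply the induction hypothesis
    calc expMaxLoad q ≤ expMaxLoad p'' := ih (by omega) p'' hp''0 hpre'' hsum'' hmaj''
    _ = expMaxLoad p' := hEp''
    _ ≤ expMaxLoad p := hEp'

/-! ### topSum of a sorted vector -/

lemma strictMono_fin_le {k : ℕ} {f : Fin k → Fin n} (hf : StrictMono f) :
    ∀ i : Fin k, (i : ℕ) ≤ (f i : ℕ) := by
  have key : ∀ m : ℕ, ∀ i : Fin k, (i : ℕ) = m → m ≤ (f i : ℕ) := by
    intro m
    induction m with
    | zero => intro i _; omega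
    | succ m ihm =>
      intro i hi
      have hm : m < k := by omega
      have hlt : (⟨m, hm⟩ : Fin k) < i := by rw [Fin.lt_def]; simp; omega
      have h1 := ihm ⟨m, hm⟩ rfl
      have h2 := hf hlt
      rw [Fin.lt_def] at h2
      omega
  exact fun i => key (i : ℕ) i rfl

lemma sum_subset_le_prefix {x : Fin n → ℝ} (hx : Antitone x) {k : ℕ} (hk : k ≤ n)
    {s : Finset (Fin n)} (hcard : s.card = k) :
    ∑ u ∈ s, x u ≤ ∑ u ∈ win n 0 k, x u := by
  set e := s.orderEmbOfFin hcard with he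
  set g : Fin k → Fin n := fun i => ⟨(i : ℕ), lt_of_lt_of_le i.2 hk⟩ with hg
  have hginj : Function.Injective g := by
    intro u v huv
    rw [hg] at huv
    simp only [Fin.mk.injEq] at huv
    exact Fin.ext huv
  have hs_img : s = univ.image e := by
    ext u
    rw [mem_image]
    constructor
    · intro hu
      have : u ∈ Set.range e := by rw [Finset.range_orderEmbOfFin]; exact hu
      obtain ⟨i, hi⟩ := this
      exact ⟨i, mem_univ i, hi⟩
    · rintro ⟨i, -, rfl⟩
      exact Finset.orderEmbOfFin_mem s hcard i
  have hw_img : win n 0 k = univ.image g := by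
    ext u
    rw [mem_win, mem_image]
    constructor
    · intro hu
      exact ⟨⟨(u : ℕ), by omega⟩, mem_univ _, by rw [hg]⟩
    · rintro ⟨i, -, rfl⟩
      rw [hg]
      simp only []
      omega
  rw [hs_img, hw_img, sum_image (fun u _ v _ h => e.injective h),
    sum_image (fun u _ v _ h => hginj h)]
  apply sum_le_sum
  intro i _
  apply hx
  rw [Fin.le_def, hg]
  exact strictMono_fin_le e.strictMono i

lemma topSum_sorted {x : Fin n → ℝ} (hx : Antitone x) {k : ℕ} (hk : k ≤ n) :
    topSum x k = ∑ u ∈ win n 0 k, x u := by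
  rw [topSum_eq_kMax]
  have hcu : (univ : Finset (Fin n)).card = n := by rw [card_univ, Fintype.card_fin]
  apply le_antisymm
  · obtain ⟨s, -, hscard, hseq⟩ := kMax_spec (x := x) (S := univ) (k := k) (by omega)
    rw [hseq]
    exact sum_subset_le_prefix hx hk hscard
  · exact le_kMax (subset_univ _) (card_win (by omega))

lemma topSum_comp_perm (x : Fin n → ℝ) (σ : Equiv.Perm (Fin n)) {k : ℕ} (hk : k ≤ n) :
    topSum (x ∘ ⇑σ) k = topSum x k := by
  rw [topSum_eq_kMax, topSum_eq_kMax]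
  have himg : (univ : Finset (Fin n)).image ⇑σ = univ := by
    ext u
    simp only [mem_image, mem_univ, iff_true]
    exact ⟨σ.symm u, by simp⟩
  rw [kMax_comp_perm x σ univ k (by rw [card_univ, Fintype.card_fin]; exact hk), himg]

/-! ### Schur convexity -/

lemma suf_n_eq_univ : suf n n = univ := by
  ext u
  rw [mem_suf]
  simp

lemma schur_step {p q : Fin n → ℝ} (hp0 : ∀ i, 0 ≤ p i) (hq0 : ∀ i, 0 ≤ q i)
    (hmaj : Majorizes p q) : expMaxLoad q ≤ expMaxLoad p := by
  set τ : Equiv.Perm (Fin n) := (Fin.revPerm).trans (Tuple.sort q) with hτ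
  set qs : Fin n → ℝ := q ∘ ⇑τ with hqs
  have hτapp : ∀ u, qs u = (q ∘ ⇑(Tuple.sort q)) (Fin.rev u) := fun u => rfl
  have hqs_anti : Antitone qs := by
    intro u u' huu'
    rw [hτapp, hτapp]
    exact Tuple.monotone_sort q (by rwa [Fin.rev_le_rev])
  have hqs0 : ∀ i, 0 ≤ qs i := fun i => hq0 _
  have hqsum : ∑ i, qs i = ∑ i, q i := by
    rw [hqs]
    exact Equiv.sum_comp τ q
  have hEqs : expMaxLoad qs = expMaxLoad q := expMaxLoad_comp_perm τ q
  have htop : ∀ k : ℕ, k ≤ n → topSum qs k = topSum q k := fun k hk =>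
    topSum_comp_perm q τ hk
  rw [← hEqs]
  apply main_induction hqs_anti hqs0 n le_rfl p hp0
  · exact fun u hu => absurd hu (by omega)
  · rw [suf_n_eq_univ]
    rw [hqsum, ← hmaj.2]
  · intro k hk
    have h1 : ∑ u ∈ win n (n - n) k, qs u = topSum qs k := by
      rw [Nat.sub_self, (topSum_sorted hqs_anti hk)]
    rw [h1, htop k hk, suf_n_eq_univ, ← topSum_eq_kMax]
    exact hmaj.1 k hk

/-! ### the uniform vector is majorized -/

lemma count_powersetCard (i : Fin n) {k : ℕ} (hk1 : 0 < k) :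
    (((univ : Finset (Fin n)).powersetCard k).filter (fun s => i ∈ s)).card
      = (n - 1).choose (k - 1) := by
  have hbij : (((univ : Finset (Fin n)).powersetCard k).filter (fun s => i ∈ s)).card
      = (((univ : Finset (Fin n)).erase i).powersetCard (k - 1)).card := by
    refine Finset.card_bij' (fun s _ => s.erase i) (fun s _ => insert i s) ?_ ?_ ?_ ?_
    case refine_1 =>
      intro s hs
      rw [mem_filter, mem_powersetCard] at hs
      rw [mem_powersetCard]
      exact ⟨erase_subset_erase i hs.1.1, by rw [card_erase_of_mem hs.2, hs.1.2]⟩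
    case refine_2 =>
      intro s hs
      rw [mem_powersetCard] at hs
      have hiS : i ∉ s := fun h => (mem_erase.1 (hs.1 h)).1 rfl
      rw [mem_filter, mem_powersetCard]
      exact ⟨⟨subset_univ _, by rw [card_insert_of_notMem hiS, hs.2]; omega⟩,
        mem_insert_self i s⟩
    case refine_3 =>
      intro s hs
      rw [mem_filter] at hs
      exact insert_erase hs.2
    case refine_4 =>
      intro s hs
      rw [mem_powersetCard] at hs
      have hiS : i ∉ s := fun h => (mem_erase.1 (hs.1 h)).1 rfl
      exact erase_insert hiS
  rw [hbij, card_powersetCard, card_erase_of_mem (mem_univ i), card_univ, Fintype.card_fin]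

lemma avg_le_kMax (hn : 0 < n) (p : Fin n → ℝ) (hpsum : ∑ i, p i = 1) {k : ℕ} (hk : k ≤ n) :
    (k : ℝ) / n ≤ kMax p univ k := by
  rcases Nat.eq_zero_or_pos k with rfl | hk1
  · rw [kMax_zero]
    simp
  set P := (univ : Finset (Fin n)).powersetCard k with hP
  have hcardu : (univ : Finset (Fin n)).card = n := by rw [card_univ, Fintype.card_fin]
  have hPcard : P.card = n.choose k := by rw [hP, card_powersetCard, hcardu]
  have hPne : P.Nonempty := by
    rw [hP]
    exact powersetCard_nonempty.2 (by omega)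
  have htotal : ∑ s ∈ P, ∑ i ∈ s, p i = ((n - 1).choose (k - 1) : ℝ) := by
    have h1 : ∀ s : Finset (Fin n), ∑ i ∈ s, p i
        = ∑ i : Fin n, (if i ∈ s then p i else 0) := by
      intro s
      rw [Finset.sum_ite_mem, univ_inter]
    calc ∑ s ∈ P, ∑ i ∈ s, p i
        = ∑ s ∈ P, ∑ i : Fin n, (if i ∈ s then p i else 0) := by
          exact sum_congr rfl fun s _ => h1 s
    _ = ∑ i : Fin n, ∑ s ∈ P, (if i ∈ s then p i else 0) := Finset.sum_comm
    _ = ∑ i : Fin n, ((n - 1).choose (k - 1) : ℝ) * p i := by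
          apply sum_congr rfl
          intro i _
          rw [← Finset.sum_filter, Finset.sum_const, count_powersetCard i hk1]
          rw [nsmul_eq_mul]
    _ = ((n - 1).choose (k - 1) : ℝ) * ∑ i, p i := by rw [← Finset.mul_sum]
    _ = ((n - 1).choose (k - 1) : ℝ) := by rw [hpsum, mul_one]
  have hex : ∃ s ∈ P, (k : ℝ) / n ≤ ∑ i ∈ s, p i := by
    by_contra hcon
    push_neg at hcon
    have hlt : ∑ s ∈ P, ∑ i ∈ s, p i < ∑ s ∈ P, (k : ℝ) / n :=
      sum_lt_sum_of_nonempty hPne hcon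
    rw [htotal, sum_const, hPcard, nsmul_eq_mul] at hlt
    -- n * C(n-1, k-1) = k * C(n, k)
    have hid : n * (n - 1).choose (k - 1) = k * n.choose k := by
      have h := Nat.add_one_mul_choose_eq (n - 1) (k - 1)
      have hn' : n - 1 + 1 = n := by omega
      have hk' : k - 1 + 1 = k := by omega
      rw [hn', hk'] at h
      rw [h, Nat.mul_comm]
    have hnR : (0:ℝ) < n := by exact_mod_cast hn
    have hcast : ((n : ℝ)) * ((n - 1).choose (k - 1) : ℝ) = (k : ℝ) * (n.choose k : ℝ) := by
      exact_mod_cast hid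
    have hlt2 : (n:ℝ) * ((n - 1).choose (k - 1) : ℝ)
        < (n:ℝ) * ((n.choose k : ℝ) * ((k : ℝ) / n)) := by
      exact mul_lt_mul_of_pos_left hlt hnR
    have hre : (n:ℝ) * ((n.choose k : ℝ) * ((k : ℝ) / n)) = (k:ℝ) * (n.choose k : ℝ) := by
      field_simp
    linarith [hlt2, hcast, hre]
  obtain ⟨s, hsP, hle⟩ := hex
  rw [hP, mem_powersetCard] at hsP
  exact le_trans hle (le_kMax hsP.1 hsP.2)

lemma majorizes_uniform (hn : 0 < n) (p : Fin n → ℝ) (hpsum : ∑ i, p i = 1) :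
    Majorizes p (fun _ : Fin n => 1 / (n : ℝ)) := by
  have hnR : (0:ℝ) < n := by exact_mod_cast hn
  constructor
  · intro k hk
    have hanti : Antitone (fun _ : Fin n => 1 / (n : ℝ)) := fun _ _ _ => le_refl _
    rw [topSum_sorted hanti hk, sum_const, card_win (by omega), nsmul_eq_mul,
      topSum_eq_kMax]
    calc (k : ℝ) * (1 / n) = (k : ℝ) / n := by ring
    _ ≤ kMax p univ k := avg_le_kMax hn p hpsum hk
  · rw [hpsum, sum_const, card_univ, Fintype.card_fin, nsmul_eq_mul]
    field_simp

/-- `E_p[Z]` is a Schur-convex function of the probability vector `p`; in particular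
it is at least the expected maximum load under the uniform distribution. -/
theorem expMaxLoad_schurConvex {n : ℕ} (hn : 0 < n) (p : Fin n → ℝ)
    (hp : ∀ i, 0 ≤ p i) (hpsum : ∑ i, p i = 1) :
    (∀ q : Fin n → ℝ, (∀ i, 0 ≤ q i) → ∑ i, q i = 1 →
        Majorizes p q → expMaxLoad q ≤ expMaxLoad p) ∧
      expMaxLoad (fun _ : Fin n => 1 / (n : ℝ)) ≤ expMaxLoad p := by
  constructor
  · intro q hq0 _ hmaj
    exact schur_step hp hq0 hmaj
  · exact schur_step hp (fun i => by positivity) (majorizes_uniform hn p hpsum)
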